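/- arXiv:1009.6066 — 2 statements merged into one kernel-verified Lean document; each statement's English description precedes it below -/
import Mathlib

section
/- Let n > 2 be a natural number, k : Fin n → ℝ, r ∈ ℝ, and set τ = Σⱼ k(j). Assume that k(j)² − τ·k(j) = r for every j, and that k takes exactly two distinct values a and b with a > b. Let n₁ be the number of indices j with k(j) = a and n₂ the number of indices with k(j) = b. Then: τ² + 4r > 0; a = (τ + √(τ² + 4r))/2 and b = (τ − √(τ² + 4r))/2; n₁ + n₂ = n; (n₂ − n₁)·√(τ² + 4r) = (n − 2)·τ; and consequently τ²·((n − 2)² − (n₂ − n₁)²) = 4·r·(n₂ − n₁)². -/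
open Finset

/-- Let `n > 2`, `k : Fin n → ℝ`, `r ∈ ℝ`, and `τ = Σⱼ k j`.
Assume `k j ^ 2 − τ * k j = r` for every `j`, and that `k` takes exactly two distinct
values `a` and `b` with `a > b`, attained `n₁` and `n₂` times respectively. Then
`τ² + 4r > 0`, `a` and `b` are the two roots of `k² − τk − r`, `n₁ + n₂ = n`,
`(n₂ − n₁)·√(τ² + 4r) = (n − 2)·τ`, and
`τ²·((n − 2)² − (n₂ − n₁)²) = 4r·(n₂ − n₁)²`. -/
theorem stmt_1 (n : ℕ) (hn : 2 < n) (k : Fin n → ℝ) (r τ a b : ℝ)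
    (hτ : τ = ∑ j, k j)
    (hroot : ∀ j, k j ^ 2 - τ * k j = r)
    (hab : ∀ j, k j = a ∨ k j = b)
    (ha : ∃ j, k j = a) (hb : ∃ j, k j = b) (hgt : a > b)
    (n₁ n₂ : ℕ)
    (hn₁ : n₁ = (Finset.univ.filter fun j => k j = a).card)
    (hn₂ : n₂ = (Finset.univ.filter fun j => k j = b).card) :
    0 < τ ^ 2 + 4 * r ∧
    a = (τ + Real.sqrt (τ ^ 2 + 4 * r)) / 2 ∧
    b = (τ - Real.sqrt (τ ^ 2 + 4 * r)) / 2 ∧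
    n₁ + n₂ = n ∧
    ((n₂ : ℝ) - (n₁ : ℝ)) * Real.sqrt (τ ^ 2 + 4 * r) = ((n : ℝ) - 2) * τ ∧
    τ ^ 2 * (((n : ℝ) - 2) ^ 2 - ((n₂ : ℝ) - (n₁ : ℝ)) ^ 2)
      = 4 * r * ((n₂ : ℝ) - (n₁ : ℝ)) ^ 2 := by
  obtain ⟨ja, hja⟩ := ha
  obtain ⟨jb, hjb⟩ := hb
  have hra : a ^ 2 - τ * a = r := by rw [← hja]; exact hroot ja
  have hrb : b ^ 2 - τ * b = r := by rw [← hjb]; exact hroot jb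
  have hne : a ≠ b := ne_of_gt hgt
  have hsum : a + b = τ := by
    have h : (a - b) * (a + b - τ) = 0 := by linear_combination hra - hrb
    rcases mul_eq_zero.1 h with h | h
    · exact absurd (sub_eq_zero.1 h) hne
    · linarith [sub_eq_zero.1 h]
  have hprod : a * b = -r := by linear_combination a * hsum - hra
  have hdisc : τ ^ 2 + 4 * r = (a - b) ^ 2 := by linear_combination -(τ + a + b) * hsum + 4 * hprod
  have hpos : 0 < τ ^ 2 + 4 * r := by
    rw [hdisc]; have h0 : 0 < a - b := sub_pos.2 hgt; positivity
  have hsqrt : Real.sqrt (τ ^ 2 + 4 * r) = a - b := by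
    rw [hdisc, Real.sqrt_sq (by linarith)]
  have hfb : univ.filter (fun j => ¬ k j = a) = univ.filter (fun j => k j = b) := by
    apply filter_congr
    intro j _
    rcases hab j with h | h <;> simp [h, hne, hne.symm]
  have hcard : n₁ + n₂ = n := by
    rw [hn₁, hn₂, ← hfb, card_filter_add_card_filter_not, card_univ, Fintype.card_fin]
  have hτsum : τ = (n₁ : ℝ) * a + (n₂ : ℝ) * b := by
    rw [hτ, ← sum_filter_add_sum_filter_not univ (fun j => k j = a) k, hfb]
    rw [sum_congr rfl (fun j hj => (mem_filter.1 hj).2),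
        sum_congr rfl (fun j hj => (mem_filter.1 hj).2)]
    simp [hn₁, hn₂, sum_const, mul_comm]
  have hncast : (n : ℝ) = (n₁ : ℝ) + (n₂ : ℝ) := by
    rw [← hcard]; push_cast; ring
  have key : ((n₂ : ℝ) - (n₁ : ℝ)) * Real.sqrt (τ ^ 2 + 4 * r) = ((n : ℝ) - 2) * τ := by
    rw [hsqrt, hncast]
    linear_combination ((n₁ : ℝ) + (n₂ : ℝ)) * hsum + 2 * hτsum
  refine ⟨hpos, by rw [hsqrt]; linarith, by rw [hsqrt]; linarith, hcard, key, ?_⟩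
  have : (((n₂ : ℝ) - (n₁ : ℝ)) * Real.sqrt (τ ^ 2 + 4 * r)) ^ 2 = (((n : ℝ) - 2) * τ) ^ 2 := by
    rw [key]
  rw [hsqrt] at this
  linear_combination (-1) * this - ((n₂ : ℝ) - (n₁ : ℝ)) ^ 2 * hdisc
end

section
/- Let M be a smooth manifold without boundary modeled on a finite-dimensional real normed space, let λ : M → ℝ be a smooth function, and let N be a continuous vector field on M (a continuous section p ↦ N(p) ∈ T_pM of the tangent bundle). Define w : M → ℝ by w(p) = dλ_p(N(p)) (the directional derivative of λ along N), and assume w is continuous. Fix a positive integer n, ε ∈ ℝ, a function μ : M → ℝ, and ψ : ℝ → ℝ of class C² with ψ′(x) ≠ 0 for every x ∈ ℝ. Suppose that for every p ∈ M: (i) ψ(λ(p)) − ε = −(2/n)·μ(p)·λ(p), and (ii) μ(p)·w(p) = 0. Then w(p) = 0 for every p ∈ M, i.e. N(λ) ≡ 0. -/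
open scoped Manifold

/-- Let `M` be a smooth boundaryless manifold modeled on a
finite-dimensional real normed space `E`, `lam : M → ℝ` a smooth function, and `N` a
continuous vector field on `M`. Let `w p = d(lam)_p (N p)` be the directional derivative
of `lam` along `N`, and assume `w` is continuous. Fix a positive integer `n`, `ε ∈ ℝ`,
a function `μ : M → ℝ`, and `ψ : ℝ → ℝ` of class `C²` with nowhere-vanishing derivative.
If `ψ(lam p) − ε = −(2/n)·μ(p)·lam(p)` and `μ(p)·w(p) = 0` for all `p`, then `w ≡ 0`. -/
theorem stmt_4 {E : Type*} [NormedAddCommGroup E] [NormedSpace ℝ E] [FiniteDimensional ℝ E]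
    {M : Type*} [TopologicalSpace M] [ChartedSpace E M]
    [IsManifold (modelWithCornersSelf ℝ E) (⊤ : ℕ∞) M]
    (lam : M → ℝ)
    (hlam : ContMDiff (modelWithCornersSelf ℝ E) (modelWithCornersSelf ℝ ℝ) (⊤ : ℕ∞) lam)
    (N : (p : M) → TangentSpace (modelWithCornersSelf ℝ E) p)
    (hN : Continuous fun p : M => (⟨p, N p⟩ : TangentBundle (modelWithCornersSelf ℝ E) M))
    (w : M → ℝ)
    (hw : ∀ p : M,
      w p = mfderiv (modelWithCornersSelf ℝ E) (modelWithCornersSelf ℝ ℝ) lam p (N p))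
    (hwc : Continuous w)
    (n : ℕ) (hn : 1 ≤ n) (ε : ℝ) (μ : M → ℝ) (ψ : ℝ → ℝ)
    (hψ : ContDiff ℝ 2 ψ) (hψ' : ∀ x : ℝ, deriv ψ x ≠ 0)
    (h1 : ∀ p : M, ψ (lam p) - ε = -(2 / (n : ℝ)) * μ p * lam p)
    (h2 : ∀ p : M, μ p * w p = 0) :
    ∀ p : M, w p = 0 := by
  have hdiff : Differentiable ℝ ψ := hψ.differentiable (by norm_num)
  -- ψ is injective, by Darboux
  have hinj : Function.Injective ψ := by
    rcases hasDerivWithinAt_forall_lt_or_forall_gt_of_forall_ne (f := ψ) (f' := deriv ψ)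
        (convex_univ) (fun x _ => (hdiff x).hasDerivAt.hasDerivWithinAt) (m := 0)
        (fun x _ => hψ' x) with h | h
    · exact (strictAnti_of_deriv_neg fun x => h x trivial).injective
    · exact (strictMono_of_deriv_pos fun x => h x trivial).injective
  intro p
  by_contra hp
  set U : Set M := {q | w q ≠ 0} with hUdef
  have hUopen : IsOpen U := isOpen_ne_fun hwc continuous_const
  have hpU : p ∈ U := hp
  have hconst : ∀ q ∈ U, lam q = lam p := by
    intro q hq
    apply hinj
    have hμq : μ q = 0 := by
      have := h2 q
      rcases mul_eq_zero.1 this with h | h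
      · exact h
      · exact absurd h hq
    have hμp : μ p = 0 := by
      have := h2 p
      rcases mul_eq_zero.1 this with h | h
      · exact h
      · exact absurd h hp
    have e1 := h1 q
    have e2 := h1 p
    rw [hμq] at e1; rw [hμp] at e2
    simp at e1 e2
    linarith
  have heq : lam =ᶠ[nhds p] fun _ => lam p :=
    Filter.eventually_of_mem (hUopen.mem_nhds hpU) hconst
  have hm0 : mfderiv (modelWithCornersSelf ℝ E) (modelWithCornersSelf ℝ ℝ) lam p = 0 := by
    rw [heq.mfderiv_eq, mfderiv_const]
  apply hp
  rw [hw p, hm0]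
  rfl
end
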